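/- Let μ1, μ2, μ3, μ4, μ5, μ6, λ1, λ2 ∈ ℝ satisfy λ1 = μ2 − μ3, λ2 = μ5 − μ6, Parodi's relation μ2 + μ3 = μ6 − μ5, and the dissipativity conditions λ1 < 0, μ1 − λ2²/λ1 ≥ 0, μ4 > 0, μ5 + μ6 ≥ −λ2²/λ1. Let A be a real symmetric 2×2 matrix, Ω a real skew-symmetric 2×2 matrix, d, h ∈ ℝ³, s ∈ ℝ, d̂ = (d₁, d₂), ĥ = (h₁, h₂), and suppose N ∈ ℝ³ satisfies λ1 N = −λ2 (Ad̂, 0) − (h + s d) + λ2 (d̂ᵀAd̂) d; set N̂ = (N₁, N₂) and σ_{ij} = μ1 (d̂ᵀAd̂) d̂_i d̂_j + μ2 N̂_i d̂_j + μ3 N̂_j d̂_i + μ4 A_{ij} + μ5 (Ad̂)_i d̂_j + μ6 (Ad̂)_j d̂_i. Then Σ_{i,j=1}^{2} σ_{ij}(A_{ij} + Ω_{ij}) − ⟨(λ2/λ1) Ad̂ − Ωd̂, ĥ⟩ − (λ2/λ1) s (d̂ᵀAd̂) ≥ μ4 Σ_{i,j} A_{ij}². -/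
import Mathlib


open Finset Matrix
set_option maxHeartbeats 2000000

/-- Embedding of `ℝ²` into `ℝ³` with vanishing third component. -/
def emb (v : Fin 2 → ℝ) (k : Fin 3) : ℝ :=
  if h : (k : ℕ) < 2 then v ⟨k, h⟩ else 0

/-- **Pointwise lower bound for the viscous dissipation of the Ericksen–Leslie
system.** Under the Leslie coefficient relations, Parodi's relation and the
dissipativity conditions, if
`lam1 N = −lam2 (Ad̂,0) − (h + s d) + lam2 (d̂ᵀAd̂) d`, then
`σ : (A+Ω) − ⟨(lam2/lam1)Ad̂ − Ωd̂, ĥ⟩ − (lam2/lam1) s (d̂ᵀAd̂) ≥ μ4 |A|²`. -/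
theorem leslie_dissipation_lower_bound
    (μ1 μ2 μ3 μ4 μ5 μ6 lam1 lam2 : ℝ)
    (hlam1 : lam1 = μ2 - μ3) (hlam2 : lam2 = μ5 - μ6)
    (hParodi : μ2 + μ3 = μ6 - μ5)
    (hlam1neg : lam1 < 0) (hμ1 : μ1 - lam2 ^ 2 / lam1 ≥ 0) (hμ4 : μ4 > 0)
    (hμ56 : μ5 + μ6 ≥ - lam2 ^ 2 / lam1)
    (A Ω : Matrix (Fin 2) (Fin 2) ℝ)
    (hA : A.IsSymm) (hΩ : Ωᵀ = -Ω)
    (d h N : Fin 3 → ℝ) (s : ℝ)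
    (hN : ∀ k : Fin 3, lam1 * N k =
      - lam2 * emb (fun i => ∑ j, A i j * d (Fin.castSucc j)) k
      - (h k + s * d k)
      + lam2 * (∑ i, ∑ j, A i j * d (Fin.castSucc i) * d (Fin.castSucc j)) * d k)
    (σ : Matrix (Fin 2) (Fin 2) ℝ)
    (hσ : ∀ i j, σ i j =
      μ1 * (∑ k, ∑ l, A k l * d (Fin.castSucc k) * d (Fin.castSucc l))
          * d (Fin.castSucc i) * d (Fin.castSucc j)
      + μ2 * N (Fin.castSucc i) * d (Fin.castSucc j)
      + μ3 * N (Fin.castSucc j) * d (Fin.castSucc i)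
      + μ4 * A i j
      + μ5 * (∑ k, A i k * d (Fin.castSucc k)) * d (Fin.castSucc j)
      + μ6 * (∑ k, A j k * d (Fin.castSucc k)) * d (Fin.castSucc i)) :
    (∑ i, ∑ j, σ i j * (A i j + Ω i j))
      - (∑ i, ((lam2 / lam1) * (∑ j, A i j * d (Fin.castSucc j))
            - (∑ j, Ω i j * d (Fin.castSucc j))) * h (Fin.castSucc i))
      - (lam2 / lam1) * s
          * (∑ i, ∑ j, A i j * d (Fin.castSucc i) * d (Fin.castSucc j))
    ≥ μ4 * (∑ i, ∑ j, (A i j) ^ 2) := by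

  have hlamne : lam1 ≠ 0 := ne_of_lt hlam1neg
  have hA10 : A 1 0 = A 0 1 := by
    have := congrFun (congrFun hA 0) 1; simpa [Matrix.transpose_apply] using this
  have hΩ00 : Ω 0 0 = 0 := by
    have := congrFun (congrFun hΩ 0) 0; simp [Matrix.transpose_apply] at this; linarith
  have hΩ11 : Ω 1 1 = 0 := by
    have := congrFun (congrFun hΩ 1) 1; simp [Matrix.transpose_apply] at this; linarith
  have hΩ10 : Ω 1 0 = -Ω 0 1 := by
    have := congrFun (congrFun hΩ 0) 1; simpa [Matrix.transpose_apply] using this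
  have hc0 : Fin.castSucc (0 : Fin 2) = (0 : Fin 3) := rfl
  have hc1 : Fin.castSucc (1 : Fin 2) = (1 : Fin 3) := rfl
  -- the N relation at k = 0, 1
  have hN0 := hN 0
  have hN1 := hN 1
  simp only [emb, Fin.sum_univ_two, hc0, hc1] at hN0 hN1
  norm_num at hN0 hN1
  have hh0 : h 0 = -(lam1 * N 0) - lam2 * (A 0 0 * d 0 + A 0 1 * d 1) - s * d 0
      + lam2 * (A 0 0 * d 0 * d 0 + A 0 1 * d 0 * d 1 + A 1 0 * d 1 * d 0 + A 1 1 * d 1 * d 1) * d 0 := by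
    linear_combination hN0
  have hh1 : h 1 = -(lam1 * N 1) - lam2 * (A 1 0 * d 0 + A 1 1 * d 1) - s * d 1
      + lam2 * (A 0 0 * d 0 * d 0 + A 0 1 * d 0 * d 1 + A 1 0 * d 1 * d 0 + A 1 1 * d 1 * d 1) * d 1 := by
    linear_combination hN1
  have key : (∑ i, ∑ j, σ i j * (A i j + Ω i j))
      - (∑ i, ((lam2 / lam1) * (∑ j, A i j * d (Fin.castSucc j))
            - (∑ j, Ω i j * d (Fin.castSucc j))) * h (Fin.castSucc i))
      - (lam2 / lam1) * s
          * (∑ i, ∑ j, A i j * d (Fin.castSucc i) * d (Fin.castSucc j))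
      = μ4 * (∑ i, ∑ j, (A i j) ^ 2)
        + (μ1 - lam2 ^ 2 / lam1)
            * (A 0 0 * d 0 * d 0 + A 0 1 * d 0 * d 1 + A 1 0 * d 1 * d 0 + A 1 1 * d 1 * d 1) ^ 2
        + (μ5 + μ6 + lam2 ^ 2 / lam1)
            * ((A 0 0 * d 0 + A 0 1 * d 1) ^ 2 + (A 1 0 * d 0 + A 1 1 * d 1) ^ 2) := by
    simp only [Fin.sum_univ_two, hσ, hc0, hc1]
    rw [hh0, hh1, hA10, hΩ00, hΩ11, hΩ10]
    have hμ2 : μ2 = (lam1 - lam2) / 2 := by rw [hlam1, hlam2]; linarith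
    have hμ3 : μ3 = -(lam1 + lam2) / 2 := by rw [hlam1, hlam2]; linarith
    rw [hμ2, hμ3, hlam2]
    field_simp
    ring
  rw [key]
  have e1 : μ1 - lam2 ^ 2 / lam1 ≥ 0 := hμ1
  have e2 : μ5 + μ6 + lam2 ^ 2 / lam1 ≥ 0 := by
    have hr : -lam2 ^ 2 / lam1 = -(lam2 ^ 2 / lam1) := by ring
    rw [hr] at hμ56; linarith
  nlinarith [mul_nonneg e1 (sq_nonneg (A 0 0 * d 0 * d 0 + A 0 1 * d 0 * d 1 + A 1 0 * d 1 * d 0 + A 1 1 * d 1 * d 1)),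
    mul_nonneg e2 (add_nonneg (sq_nonneg (A 0 0 * d 0 + A 0 1 * d 1)) (sq_nonneg (A 1 0 * d 0 + A 1 1 * d 1)))]
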